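/- If (Y;S) is a faithful primitive representation of a finite semigroup on a finite set Y with |Y| > 2 and J is the set of minimal functions of (Y;S), then the representation (Y;J) (the action of J on Y) is faithful and primitive, and it is a c-representation: for j, k ∈ J, the composite j∘k is either in J or a constant function. -/
import Mathlib


section TransformationReps

variable {Y : Type*}

/-- A constant function. -/
def IsConst (f : Y → Y) : Prop := ∃ c, ∀ y, f y = c

/-- `W` is a minimal set of the representation given by the set `T` of transformations:
it is a non-singleton image set which is minimal among non-singleton image sets. -/
def MinSet (T : Set (Y → Y)) (W : Set Y) : Prop :=
  2 ≤ W.ncard ∧ (∃ s ∈ T, Set.range s = W) ∧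
    ∀ t ∈ T, 2 ≤ (Set.range t).ncard → Set.range t ⊆ W → Set.range t = W

/-- A minimal function: an element of `T` whose image is a minimal set. -/
def MinFun (T : Set (Y → Y)) (f : Y → Y) : Prop :=
  f ∈ T ∧ MinSet T (Set.range f)

end TransformationReps

section AuxLemmas

variable {Y : Type*}

lemma isConst_of_ncard_le_one [Finite Y] [Nonempty Y] (f : Y → Y)
    (h : (Set.range f).ncard ≤ 1) : IsConst f := by
  have hne : (Set.range f).Nonempty := Set.range_nonempty f
  have hfin : (Set.range f).Finite := Set.toFinite _
  have h1 : (Set.range f).ncard = 1 := by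
    have := (Set.ncard_pos hfin).mpr hne
    omega
  obtain ⟨c, hc⟩ := Set.ncard_eq_one.mp h1
  refine ⟨c, fun y => ?_⟩
  have : f y ∈ ({c} : Set Y) := hc ▸ Set.mem_range_self y
  simpa using this

variable {S : Type*} [Semigroup S]

/-- A minimal function composed (on the right) with anything is minimal or constant. -/
lemma minfun_mul [Finite Y] [Nonempty Y] (γ : S → Y → Y)
    (hγ : ∀ s t : S, γ (s * t) = γ s ∘ γ t) {s : S}
    (hs : MinFun (Set.range γ) (γ s)) (t : S) :
    MinFun (Set.range γ) (γ (s * t)) ∨ IsConst (γ (s * t)) := by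
  have hsub : Set.range (γ (s * t)) ⊆ Set.range (γ s) := by
    rw [hγ]; exact Set.range_comp_subset_range _ _
  by_cases h2 : 2 ≤ (Set.range (γ (s * t))).ncard
  · left
    have heq : Set.range (γ (s * t)) = Set.range (γ s) :=
      hs.2.2.2 _ ⟨s * t, rfl⟩ h2 hsub
    exact ⟨⟨s * t, rfl⟩, by rw [heq]; exact hs.2⟩
  · right
    exact isConst_of_ncard_le_one _ (by omega)

end AuxLemmas

/-- If `(Y;S)` is a faithful primitive representation with `|Y| > 2` and
`J = {s ∈ S : γ(s) is a minimal function}`, then the representation `(Y;J)` is faithful,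
primitive, and a c-representation: the composite of (the transformations of) two elements
of `J` is again (the transformation of) an element of `J` or a constant function. -/
theorem minimal_functions_rep_faithful_primitive_c {S Y : Type*} [Semigroup S] [Fintype S]
    [Fintype Y] (γ : S → Y → Y) (hγ : ∀ s t : S, γ (s * t) = γ s ∘ γ t)
    (hfaithful : Function.Injective γ)
    (hcard : 2 < Fintype.card Y)
    (hprim : ∀ θ : Y → Y → Prop, Equivalence θ →
      (∀ a b, θ a b → ∀ s : S, θ (γ s a) (γ s b)) →
      (∀ a b, θ a b → a = b) ∨ (∀ a b, θ a b)) :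
    (∀ s t : S, MinFun (Set.range γ) (γ s) → MinFun (Set.range γ) (γ t) →
      γ s = γ t → s = t) ∧
    (∀ θ : Y → Y → Prop, Equivalence θ →
      (∀ a b, θ a b → ∀ s : S, MinFun (Set.range γ) (γ s) → θ (γ s a) (γ s b)) →
      (∀ a b, θ a b → a = b) ∨ (∀ a b, θ a b)) ∧
    (∀ s t : S, MinFun (Set.range γ) (γ s) → MinFun (Set.range γ) (γ t) →
      (∃ u : S, MinFun (Set.range γ) (γ u) ∧ γ s ∘ γ t = γ u) ∨
        IsConst (γ s ∘ γ t)) := by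
  classical
  have hY : Nonempty Y := Fintype.card_pos_iff.mp (by omega)
  -- there is a non-constant transformation
  have hnc : ∃ s : S, 2 ≤ (Set.range (γ s)).ncard := by
    by_contra hno
    push_neg at hno
    have hconst : ∀ (s : S) (x y : Y), γ s x = γ s y := by
      intro s x y
      obtain ⟨c, hc⟩ := isConst_of_ncard_le_one (γ s) (by have := hno s; omega)
      rw [hc, hc]
    obtain ⟨a, b, hab⟩ := Fintype.exists_pair_of_one_lt_card (α := Y) (by omega)
    obtain ⟨c, hca, hcb⟩ : ∃ c : Y, c ≠ a ∧ c ≠ b := by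
      by_contra h
      push_neg at h
      have hsub : (Finset.univ : Finset Y) ⊆ {a, b} := by
        intro x _
        rcases (em (x = a)) with h1 | h1
        · simp [h1]
        · simp [h x h1]
      have := Finset.card_le_card hsub
      have h2 : ({a, b} : Finset Y).card ≤ 2 := Finset.card_le_two
      simp [Finset.card_univ] at this
      omega
    set θ₀ : Y → Y → Prop :=
      fun x y => x = y ∨ (x = a ∧ y = b) ∨ (x = b ∧ y = a) with hθ₀
    have hθ₀eq : Equivalence θ₀ := by
      constructor
      · intro x; exact Or.inl rfl
      · intro x y h; rcases h with h | ⟨h1, h2⟩ | ⟨h1, h2⟩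
        · exact Or.inl h.symm
        · exact Or.inr (Or.inr ⟨h2, h1⟩)
        · exact Or.inr (Or.inl ⟨h2, h1⟩)
      · intro x y z h1 h2
        rcases h1 with h1 | ⟨h1, h1'⟩ | ⟨h1, h1'⟩ <;>
          rcases h2 with h2 | ⟨h2, h2'⟩ | ⟨h2, h2'⟩ <;>
          subst_vars <;> simp_all [θ₀]
    rcases hprim θ₀ hθ₀eq (fun x y _ s => Or.inl (hconst s x y)) with h | h
    · exact hab (h a b (Or.inr (Or.inl ⟨rfl, rfl⟩)))
    · rcases h a c with h' | ⟨h1, h2⟩ | ⟨h1, h2⟩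
      · exact hca h'.symm
      · exact hcb h2
      · exact hab h1
  -- a minimal function of globally minimum rank
  obtain ⟨s₀, hs₀2, hs₀min⟩ :
      ∃ s₀ : S, 2 ≤ (Set.range (γ s₀)).ncard ∧
        ∀ t : S, 2 ≤ (Set.range (γ t)).ncard →
          (Set.range (γ s₀)).ncard ≤ (Set.range (γ t)).ncard := by
    set A : Set ℕ := {n | ∃ s : S, 2 ≤ (Set.range (γ s)).ncard ∧
        (Set.range (γ s)).ncard = n} with hA
    have hAne : A.Nonempty := by
      obtain ⟨s, hs⟩ := hnc; exact ⟨_, s, hs, rfl⟩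
    obtain ⟨s, hs2, hsn⟩ := Nat.sInf_mem hAne
    refine ⟨s, hs2, fun t ht => ?_⟩
    have := Nat.sInf_le (show (Set.range (γ t)).ncard ∈ A from ⟨t, ht, rfl⟩)
    omega
  have hs₀minfun : MinFun (Set.range γ) (γ s₀) := by
    refine ⟨⟨s₀, rfl⟩, hs₀2, ⟨γ s₀, ⟨s₀, rfl⟩, rfl⟩, ?_⟩
    rintro t ⟨u, rfl⟩ ht2 htsub
    exact Set.eq_of_subset_of_ncard_le htsub (hs₀min u ht2) (Set.toFinite _)
  refine ⟨fun s t _ _ h => hfaithful h, ?_, ?_⟩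
  · -- primitivity of (Y; J)
    intro θ hθeq hθcomp
    by_cases hd : ∀ a b, θ a b → a = b
    · exact Or.inl hd
    push_neg at hd
    obtain ⟨a, b, hab, hne⟩ := hd
    refine Or.inr ?_
    -- τ : the relation "θ-related under every minimal function"
    set τ : Y → Y → Prop :=
      fun x y => ∀ s : S, MinFun (Set.range γ) (γ s) → θ (γ s x) (γ s y) with hτ
    have hτeq : Equivalence τ :=
      ⟨fun x s _ => hθeq.refl _,
       fun h s hs => hθeq.symm (h s hs),
       fun h1 h2 s hs => hθeq.trans (h1 s hs) (h2 s hs)⟩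
    have hτcomp : ∀ x y, τ x y → ∀ t : S, τ (γ t x) (γ t y) := by
      intro x y hxy t s hs
      rcases minfun_mul γ hγ hs t with h | h
      · have := hxy _ h
        rw [hγ s t] at this
        exact this
      · obtain ⟨c, hc⟩ := h
        have h1 : γ s (γ t x) = c := by
          have := hc x; rw [hγ s t] at this; exact this
        have h2 : γ s (γ t y) = c := by
          have := hc y; rw [hγ s t] at this; exact this
        rw [h1, h2]
        exact hθeq.refl _
    have hτuniv : ∀ x y, τ x y := by
      rcases hprim τ hτeq hτcomp with h | h
      · exact absurd (h a b (fun s hs => hθcomp a b hab s hs)) hne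
      · exact h
    -- pick a non-trivial pair inside the minimum minimal set
    obtain ⟨p, hp, q, hq, hpq⟩ :=
      (Set.one_lt_ncard (Set.toFinite _)).mp (by omega : 1 < (Set.range (γ s₀)).ncard)
    obtain ⟨x, hx⟩ := hp
    obtain ⟨y, hy⟩ := hq
    -- χ : θ together with all its images under S
    set χ : Y → Y → Prop :=
      fun u v => θ u v ∧ ∀ s : S, θ (γ s u) (γ s v) with hχ
    have hχeq : Equivalence χ :=
      ⟨fun u => ⟨hθeq.refl _, fun s => hθeq.refl _⟩,
       fun h => ⟨hθeq.symm h.1, fun s => hθeq.symm (h.2 s)⟩,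
       fun h1 h2 => ⟨hθeq.trans h1.1 h2.1, fun s => hθeq.trans (h1.2 s) (h2.2 s)⟩⟩
    have hχcomp : ∀ u v, χ u v → ∀ t : S, χ (γ t u) (γ t v) := by
      intro u v huv t
      refine ⟨huv.2 t, fun s => ?_⟩
      have := huv.2 (s * t)
      rw [hγ s t] at this
      exact this
    have hχpq : χ p q := by
      constructor
      · have := hτuniv x y s₀ hs₀minfun
        rwa [hx, hy] at this
      · intro s
        by_cases he : γ s p = γ s q
        · rw [he]; exact hθeq.refl _
        · -- γ (s * s₀) is a minimal function (minimum-rank argument)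
          have hmf : MinFun (Set.range γ) (γ (s * s₀)) := by
            have hrange : Set.range (γ (s * s₀)) = γ s '' Set.range (γ s₀) := by
              rw [hγ s s₀, Set.range_comp]
            have h2 : 2 ≤ (Set.range (γ (s * s₀))).ncard := by
              have hmem1 : γ s p ∈ Set.range (γ (s * s₀)) := by
                rw [hrange]; exact ⟨p, ⟨x, hx⟩, rfl⟩
              have hmem2 : γ s q ∈ Set.range (γ (s * s₀)) := by
                rw [hrange]; exact ⟨q, ⟨y, hy⟩, rfl⟩
              have := (Set.one_lt_ncard (Set.toFinite _)).mpr
                ⟨_, hmem1, _, hmem2, he⟩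
              omega
            have hle : (Set.range (γ (s * s₀))).ncard ≤ (Set.range (γ s₀)).ncard := by
              rw [hrange]; exact Set.ncard_image_le (Set.toFinite _)
            refine ⟨⟨s * s₀, rfl⟩, h2, ⟨γ (s * s₀), ⟨s * s₀, rfl⟩, rfl⟩, ?_⟩
            rintro t ⟨u, rfl⟩ ht2 htsub
            refine Set.eq_of_subset_of_ncard_le htsub ?_ (Set.toFinite _)
            have := hs₀min u ht2
            omega
          have := hτuniv x y (s * s₀) hmf
          rw [hγ s s₀] at this
          simp only [Function.comp_apply] at this
          rwa [hx, hy] at this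
    rcases hprim χ hχeq hχcomp with h | h
    · exact absurd (h p q hχpq) hpq
    · exact fun u v => (h u v).1
  · -- c-representation
    intro s t hs ht
    rcases minfun_mul γ hγ hs t with h | h
    · exact Or.inl ⟨s * t, h, (hγ s t).symm⟩
    · right
      rw [hγ s t] at h
      exact h
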